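/- Let C be a finite nonempty set, P ⊆ Q ⊆ C × C, and let d_0, ..., d_n : C³ → C be idempotent ternary operations (d_i(x,x,x) = x) such that: (a) P and Q are each closed under every d_i applied coordinatewise (if all three argument pairs lie in P then the result pair lies in P, and similarly for Q); (b) if (p,p') ∈ P, (q,q') ∈ Q, (r,r') ∈ P then (d_i(p,q,r), d_i(p',q',r')) ∈ P for every i; (c) d_i(x,y,y) = d_{i+1}(x,x,y) for all i < n; (d) d_0(x,y,z) = x and d_n(x,y,z) = z. Assume the diagonal {(c,c) : c ∈ C} is contained in Q and that there exists a closed P-walk of positive length. Then there exists c ∈ C with (c,c) ∈ P. -/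

import Mathlib

namespace Stmt4Aux

variable {C : Type*}

/-- alternating pure vertices -/
def vv (x y : C) : ℕ → C := fun i => if i % 2 = 1 then x else y

/-- the ladder -/
def WW (d : ℕ → C → C → C → C) (x y : C) : ℕ → C :=
  fun i => Nat.rec y (fun k Wk => d (k + 1) (vv x y (k + 1)) (vv x y (k + 1)) Wk) i

lemma WW_succ (d : ℕ → C → C → C → C) (x y : C) (i : ℕ) :
    WW d x y (i + 1) = d (i + 1) (vv x y (i + 1)) (vv x y (i + 1)) (WW d x y i) := rfl

/-- T(2): a 2-cycle yields a loop. -/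
lemma T2 (P Q : C → C → Prop) (n : ℕ) (d : ℕ → C → C → C → C)
    (hPQ : ∀ x y, P x y → Q x y)
    (hidem : ∀ i ≤ n, ∀ x : C, d i x x x = x)
    (haQ : ∀ i ≤ n, ∀ p p' q q' r r', Q p p' → Q q q' → Q r r' →
      Q (d i p q r) (d i p' q' r'))
    (hb : ∀ i ≤ n, ∀ p p' q q' r r', P p p' → Q q q' → P r r' →
      P (d i p q r) (d i p' q' r'))
    (hchain : ∀ i < n, ∀ x y : C, d i x y y = d (i + 1) x x y)
    (hd0 : ∀ x y z : C, d 0 x y z = x)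
    (hdn : ∀ x y z : C, d n x y z = z)
    (hdiag : ∀ c : C, Q c c)
    (hn : 2 ≤ n) (x y : C) (hxy : P x y) (hyx : P y x) :
    ∃ s : C, P s s := by
  have hvc : ∀ i, vv x y i = x ∨ vv x y i = y := by
    intro i; unfold vv; by_cases h : i % 2 = 1 <;> simp [h]
  have hQp : ∀ z w : C, (z = x ∨ z = y) → (w = x ∨ w = y) → Q z w := by
    rintro z w (rfl | rfl) (rfl | rfl)
    exacts [hdiag _, hPQ _ _ hxy, hPQ _ _ hyx, hdiag _]
  have hvP : ∀ i, P (vv x y (i + 1)) (vv x y i) := by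
    intro i
    rcases Nat.mod_two_eq_zero_or_one i with h | h
    · have h1 : (i + 1) % 2 = 1 := by omega
      unfold vv; rw [if_pos h1, if_neg (by omega : ¬ i % 2 = 1)]; exact hxy
    · have h1 : ¬ ((i + 1) % 2 = 1) := by omega
      unfold vv; rw [if_neg h1, if_pos h]; exact hyx
  have hW1 : WW d x y 1 = x := by
    have h1 : vv x y 1 = x := by unfold vv; norm_num
    rw [WW_succ, h1]
    show d 1 x x (WW d x y 0) = x
    have h0 : WW d x y 0 = y := rfl
    rw [h0, ← hchain 0 (by omega), hd0]
  have hQ1 : ∀ i, i ≤ n - 1 → ∀ z, (z = x ∨ z = y) → Q (WW d x y i) z := by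
    intro i
    induction i with
    | zero => intro _ z hz; exact hQp _ _ (Or.inr rfl) hz
    | succ i ih =>
      intro hi z hz
      have hin : i + 1 ≤ n := by omega
      have hthis := haQ (i + 1) hin (vv x y (i + 1)) z (vv x y (i + 1)) z (WW d x y i) z
        (hQp _ _ (hvc _) hz) (hQp _ _ (hvc _) hz) (ih (by omega) z hz)
      rw [hidem (i + 1) hin z] at hthis
      exact hthis
  have hG : ∀ i, i + 1 ≤ n - 1 → P (WW d x y (i + 1)) (WW d x y i) := by
    intro i
    induction i with
    | zero => intro _; rw [hW1]; exact hxy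
    | succ i ih =>
      intro hi
      have h1n : i + 1 < n := by omega
      have key := hb (i + 1) (by omega) (vv x y (i + 2)) (vv x y (i + 1))
        (WW d x y (i + 1)) (vv x y (i + 1)) (WW d x y (i + 1)) (WW d x y i)
        (hvP (i + 1)) (hQ1 (i + 1) (by omega) _ (hvc _)) (ih (by omega))
      rw [hchain (i + 1) h1n] at key
      exact key
  obtain ⟨m, rfl⟩ : ∃ m, n = m + 2 := ⟨n - 2, by omega⟩
  refine ⟨WW d x y (m + 1), ?_⟩
  have key := hb (m + 1) (by omega) (vv x y (m + 2)) (vv x y (m + 1))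
    (WW d x y (m + 1)) (vv x y (m + 1)) (WW d x y (m + 1)) (WW d x y m)
    (hvP (m + 1)) (hQ1 (m + 1) (by omega) _ (hvc _)) (hG m (by omega))
  rw [hchain (m + 1) (by omega), hdn] at key
  exact key

/-- exact-length walks -/
def pow (R : C → C → Prop) (N : ℕ) : C → C → Prop :=
  fun a b => ∃ g : ℕ → C, g 0 = a ∧ g N = b ∧ ∀ i < N, R (g i) (g (i + 1))

lemma pow_mono (P Q : C → C → Prop) (hPQ : ∀ x y, P x y → Q x y) (N : ℕ) (a b : C) :
    pow P N a b → pow Q N a b := by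
  rintro ⟨g, h0, h1, hs⟩; exact ⟨g, h0, h1, fun i hi => hPQ _ _ (hs i hi)⟩

lemma pow_diag (Q : C → C → Prop) (hdiag : ∀ c : C, Q c c) (N : ℕ) (c : C) :
    pow Q N c c := ⟨fun _ => c, rfl, rfl, fun _ _ => hdiag c⟩

lemma pow_rule (R S U : C → C → Prop) (f : C → C → C → C)
    (h : ∀ p p' q q' r r', R p p' → S q q' → R r r' → U (f p q r) (f p' q' r')) (N : ℕ)
    {p p' q q' r r' : C} (hp : pow R N p p') (hq : pow S N q q') (hr : pow R N r r') :
    pow U N (f p q r) (f p' q' r') := by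
  obtain ⟨gp, hp0, hp1, hps⟩ := hp
  obtain ⟨gq, hq0, hq1, hqs⟩ := hq
  obtain ⟨gr, hr0, hr1, hrs⟩ := hr
  refine ⟨fun t => f (gp t) (gq t) (gr t), ?_, ?_, ?_⟩
  · show f (gp 0) (gq 0) (gr 0) = f p q r
    rw [hp0, hq0, hr0]
  · show f (gp N) (gq N) (gr N) = f p' q' r'
    rw [hp1, hq1, hr1]
  · intro t ht
    exact h _ _ _ _ _ _ (hps t ht) (hqs t ht) (hrs t ht)

lemma pow_trans (R : C → C → Prop) (A B : ℕ) (a b c : C)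
    (h1 : pow R A a b) (h2 : pow R B b c) : pow R (A + B) a c := by
  obtain ⟨ga, ha0, haA, has⟩ := h1
  obtain ⟨gb, hb0, hbB, hbs⟩ := h2
  refine ⟨fun t => if t < A then ga t else gb (t - A), ?_, ?_, ?_⟩
  · show (if 0 < A then ga 0 else gb (0 - A)) = a
    by_cases h0 : 0 < A
    · rw [if_pos h0]; exact ha0
    · have hA : A = 0 := by omega
      rw [if_neg h0, Nat.zero_sub, hb0, ← haA, hA]
      exact ha0
  · show (if A + B < A then ga (A + B) else gb (A + B - A)) = c
    have hnlt : ¬ (A + B < A) := by omega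
    rw [if_neg hnlt, show A + B - A = B by omega]; exact hbB
  · intro i hi
    show R (if i < A then ga i else gb (i - A))
      (if i + 1 < A then ga (i + 1) else gb (i + 1 - A))
    by_cases hc1 : i + 1 < A
    · rw [if_pos hc1, if_pos (by omega : i < A)]
      exact has i (by omega)
    · by_cases hc2 : i < A
      · have hiA : i + 1 = A := by omega
        rw [if_pos hc2, if_neg hc1, show i + 1 - A = 0 by omega, hb0, ← haA, ← hiA]
        exact has i (by omega)
      · rw [if_neg hc1, if_neg hc2, show i + 1 - A = (i - A) + 1 by omega]
        exact hbs (i - A) (by omega)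

/-- the descent: closed walks of length a power of two yield a loop -/
lemma descent (n : ℕ) (d : ℕ → C → C → C → C)
    (hidem : ∀ i ≤ n, ∀ x : C, d i x x x = x)
    (hchain : ∀ i < n, ∀ x y : C, d i x y y = d (i + 1) x x y)
    (hd0 : ∀ x y z : C, d 0 x y z = x)
    (hdn : ∀ x y z : C, d n x y z = z)
    (hn : 2 ≤ n)
    (P Q : C → C → Prop)
    (hPQ : ∀ x y, P x y → Q x y)
    (haQ : ∀ i ≤ n, ∀ p p' q q' r r', Q p p' → Q q q' → Q r r' →
      Q (d i p q r) (d i p' q' r'))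
    (hb : ∀ i ≤ n, ∀ p p' q q' r r', P p p' → Q q q' → P r r' →
      P (d i p q r) (d i p' q' r'))
    (hdiag : ∀ c : C, Q c c) :
    ∀ j : ℕ, (∃ c, pow P (2 ^ j) c c) → ∃ s : C, P s s := by
  intro j
  induction j with
  | zero =>
    rintro ⟨c, g, h0, h1, hs⟩
    refine ⟨c, ?_⟩
    have hstep := hs 0 (by norm_num)
    have h1' : g 1 = c := h1
    rw [h0, h1'] at hstep
    exact hstep
  | succ j ih =>
    rintro ⟨c, g, h0, h1, hs⟩
    have hMM : 2 ^ (j + 1) = 2 ^ j + 2 ^ j := by rw [pow_succ]; ring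
    have hp1 : pow P (2 ^ j) c (g (2 ^ j)) :=
      ⟨g, h0, rfl, fun i hi => hs i (by omega)⟩
    have hp2 : pow P (2 ^ j) (g (2 ^ j)) c := by
      refine ⟨fun t => g (2 ^ j + t), rfl, ?_, ?_⟩
      · show g (2 ^ j + 2 ^ j) = c
        rw [← hMM]; exact h1
      · intro i hi
        have hstep := hs (2 ^ j + i) (by omega)
        show P (g (2 ^ j + i)) (g (2 ^ j + (i + 1)))
        rw [show 2 ^ j + (i + 1) = (2 ^ j + i) + 1 by omega]
        exact hstep
    obtain ⟨s, hs2⟩ := T2 (pow P (2 ^ j)) (pow Q (2 ^ j)) n d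
      (pow_mono P Q hPQ (2 ^ j))
      hidem
      (fun i hi p p' q q' r r' ha hb' hc =>
        pow_rule Q Q Q (d i) (haQ i hi) (2 ^ j) ha hb' hc)
      (fun i hi p p' q q' r r' ha hb' hc =>
        pow_rule P Q P (d i) (hb i hi) (2 ^ j) ha hb' hc)
      hchain hd0 hdn
      (pow_diag Q hdiag (2 ^ j))
      hn c (g (2 ^ j)) hp1 hp2
    exact ih ⟨s, hs2⟩

end Stmt4Aux

theorem stmt4 {C : Type*} [Fintype C] [Nonempty C] (P Q : C → C → Prop)
    (hPQ : ∀ x y, P x y → Q x y)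
    (n : ℕ) (d : ℕ → C → C → C → C)
    (hidem : ∀ i ≤ n, ∀ x : C, d i x x x = x)
    (haP : ∀ i ≤ n, ∀ p p' q q' r r', P p p' → P q q' → P r r' →
      P (d i p q r) (d i p' q' r'))
    (haQ : ∀ i ≤ n, ∀ p p' q q' r r', Q p p' → Q q q' → Q r r' →
      Q (d i p q r) (d i p' q' r'))
    (hb : ∀ i ≤ n, ∀ p p' q q' r r', P p p' → Q q q' → P r r' →
      P (d i p q r) (d i p' q' r'))
    (hchain : ∀ i < n, ∀ x y : C, d i x y y = d (i + 1) x x y)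
    (hd0 : ∀ x y z : C, d 0 x y z = x)
    (hdn : ∀ x y z : C, d n x y z = z)
    (hdiag : ∀ c : C, Q c c)
    (hwalk : ∃ m : ℕ, 0 < m ∧ ∃ f : ℕ → C, f 0 = f m ∧
      ∀ i < m, P (f i) (f (i + 1))) :
    ∃ c : C, P c c := by
  classical
  obtain ⟨m, hm, f, hfm, hf⟩ := hwalk
  -- degenerate cases: n ≤ 1 forces C to be a subsingleton
  by_cases hn2 : n ≤ 1
  · have key : ∀ a b : C, a = b := by
      intro a b
      rcases Nat.le_one_iff_eq_zero_or_eq_one.mp hn2 with h | h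
      · have h1 := hd0 a a b
        have h2 := hdn a a b
        rw [h] at h2
        rw [← h1, h2]
      · have h1 := hchain 0 (by omega) a b
        rw [hd0] at h1
        have h2 := hdn a a b
        rw [h] at h2
        rw [h1, h2]
    refine ⟨f 0, ?_⟩
    have h := hf 0 hm
    rwa [key (f 1) (f 0)] at h
  push_neg at hn2
  have hn : 2 ≤ n := hn2
  -- trivial case m = 1
  by_cases hm1 : m = 1
  · refine ⟨f 0, ?_⟩
    have h := hf 0 hm
    rw [hm1] at hfm
    rwa [← hfm] at h
  have hm2 : 2 ≤ m := by omega
  -- periodic extension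
  set F : ℕ → C := fun i => f (i % m) with hF
  have hFstep : ∀ i, P (F i) (F (i + 1)) := by
    intro i
    have h1 : i % m < m := Nat.mod_lt _ (by omega)
    have h1m : 1 % m = 1 := Nat.mod_eq_of_lt (by omega)
    have key : (i + 1) % m = (i % m + 1) % m := by
      rw [Nat.add_mod, h1m]
    show P (f (i % m)) (f ((i + 1) % m))
    by_cases hc : i % m + 1 = m
    · have h0 : (i + 1) % m = 0 := by rw [key, hc, Nat.mod_self]
      have hstep := hf (i % m) h1
      rw [hc, ← hfm] at hstep
      rw [h0]
      exact hstep
    · have h2 : i % m + 1 < m := by omega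
      have h0 : (i + 1) % m = i % m + 1 := by rw [key]; exact Nat.mod_eq_of_lt h2
      rw [h0]
      exact hf _ h1
  have hFper : ∀ i, F (i + m) = F i := by
    intro i
    show f ((i + m) % m) = f (i % m)
    rw [Nat.add_mod_right]
  have hF0 : F 0 = f 0 := by
    show f (0 % m) = f 0
    rw [Nat.zero_mod]
  -- write n = n' + 2
  obtain ⟨n', rfl⟩ : ∃ n', n = n' + 2 := ⟨n - 2, by omega⟩
  -- the surplus walk g
  set g : ℕ → C := fun t => d (t + 1) (F t) (F t) (F (t + (m - 1))) with hg
  have hg0 : g 0 = F 0 := by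
    show d 1 (F 0) (F 0) (F (0 + (m - 1))) = F 0
    rw [← hchain 0 (by omega), hd0]
  have hgtop : g (n' + 1) = F n' := by
    show d (n' + 2) (F (n' + 1)) (F (n' + 1)) (F (n' + 1 + (m - 1))) = F n'
    rw [hdn, show n' + 1 + (m - 1) = n' + m by omega, hFper]
  have hgstep : ∀ t, t ≤ n' → P (g t) (g (t + 1)) := by
    intro t ht
    have hcn : t + 1 < n' + 2 := by omega
    have hthird : P (F (t + (m - 1))) (F t) := by
      have h := hFstep (t + (m - 1))
      rwa [show t + (m - 1) + 1 = t + m by omega, hFper] at h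
    have key := hb (t + 1) (by omega) (F t) (F (t + 1)) (F t) (F t) (F (t + (m - 1))) (F t)
      (hFstep t) (hdiag (F t)) hthird
    rw [hchain (t + 1) hcn] at key
    have e1 : g (t + 1) = d (t + 2) (F (t + 1)) (F (t + 1)) (F t) := by
      show d (t + 2) (F (t + 1)) (F (t + 1)) (F (t + 1 + (m - 1))) = _
      rw [show t + 1 + (m - 1) = t + m by omega, hFper]
    rw [e1]
    exact key
  -- the closed walk of length L ≡ 1 (mod m)
  set q1 : ℕ := n' / m + 2 with hq1
  set L : ℕ := m * q1 + 1 with hL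
  have hdm := Nat.div_add_mod n' m
  have hmodlt : n' % m < m := Nat.mod_lt _ (by omega)
  have hexp : m * q1 = m * (n' / m) + 2 * m := by rw [hq1]; ring
  have hLn : n' + 2 ≤ L := by omega
  set walkH : ℕ → C := fun t => if t < n' + 1 then g t else F (t - 1) with hwalkH
  have hh0 : walkH 0 = f 0 := by
    show (if 0 < n' + 1 then g 0 else F (0 - 1)) = f 0
    rw [if_pos (by omega), hg0, hF0]
  have hhL : walkH L = f 0 := by
    show (if L < n' + 1 then g L else F (L - 1)) = f 0
    rw [if_neg (by omega), show L - 1 = m * q1 by omega]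
    show f ((m * q1) % m) = f 0
    rw [Nat.mul_mod_right]
  have hhstep : ∀ t, t < L → P (walkH t) (walkH (t + 1)) := by
    intro t ht
    show P (if t < n' + 1 then g t else F (t - 1))
      (if t + 1 < n' + 1 then g (t + 1) else F (t + 1 - 1))
    by_cases h1 : t + 1 < n' + 1
    · rw [if_pos h1, if_pos (by omega : t < n' + 1)]
      exact hgstep t (by omega)
    · by_cases h2 : t < n' + 1
      · have ht' : t = n' := by omega
        rw [if_pos h2, if_neg h1, show t + 1 - 1 = t by omega, ht', ← hgtop]
        exact hgstep n' le_rfl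
      · rw [if_neg h1, if_neg h2, show t + 1 - 1 = t by omega]
        have h := hFstep (t - 1)
        rwa [show t - 1 + 1 = t by omega] at h
    -- closed walk machinery
  have hClm : Stmt4Aux.pow P m (f 0) (f 0) := by
    refine ⟨F, hF0, ?_, fun i _ => hFstep i⟩
    show f (m % m) = f 0
    rw [Nat.mod_self]
  have hClL : Stmt4Aux.pow P L (f 0) (f 0) := ⟨walkH, hh0, hhL, hhstep⟩
  have hClmul : ∀ a : ℕ, Stmt4Aux.pow P (a * m) (f 0) (f 0) := by
    intro a
    induction a with
    | zero =>
      exact ⟨fun _ => f 0, rfl, rfl, fun i hi => absurd hi (by omega)⟩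
    | succ a ih =>
      have h := Stmt4Aux.pow_trans P (a * m) m (f 0) (f 0) (f 0) ih hClm
      rwa [show a * m + m = (a + 1) * m by ring] at h
  have hClmix : ∀ b a : ℕ, Stmt4Aux.pow P (a * m + b * L) (f 0) (f 0) := by
    intro b
    induction b with
    | zero => intro a; simpa using hClmul a
    | succ b ih =>
      intro a
      have h := Stmt4Aux.pow_trans P (a * m + b * L) L (f 0) (f 0) (f 0) (ih a) hClL
      rwa [show a * m + b * L + L = a * m + (b + 1) * L by ring] at h
  -- arithmetic: 2^(m+L) = a*m + b*L for suitable a, b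
  have harith : ∃ a b : ℕ, 2 ^ (m + L) = a * m + b * L := by
    set N : ℕ := 2 ^ (m + L) with hN
    have hmN : m * L ≤ N := by
      have h1 : m < 2 ^ m := Nat.lt_two_pow_self (n := m)
      have h2 : L < 2 ^ L := Nat.lt_two_pow_self (n := L)
      calc m * L ≤ 2 ^ m * 2 ^ L := Nat.mul_le_mul h1.le h2.le
        _ = N := (pow_add 2 m L).symm
    set b : ℕ := N % m with hb'
    have hd1 : m * (N / m) + b = N := Nat.div_add_mod N m
    have hbq : b * q1 ≤ N / m := by
      have h1 : L ≤ N / m := by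
        rw [Nat.le_div_iff_mul_le (by omega : 0 < m), mul_comm]
        exact hmN
      have h2 : b < m := Nat.mod_lt _ (by omega)
      have hq1pos : 0 < q1 := by
        rw [hq1]
        exact Nat.lt_of_lt_of_le (by norm_num) (Nat.le_add_left 2 (n' / m))
      have h3 : b * q1 < m * q1 := by
        exact Nat.mul_lt_mul_of_lt_of_le h2 le_rfl hq1pos
      have h4 : b * q1 < m * q1 + 1 := Nat.lt_succ_of_lt h3
      rw [← hL] at h4
      exact (lt_of_lt_of_le h4 h1).le
    refine ⟨N / m - b * q1, b, ?_⟩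
    have e1 : (N / m - b * q1) * m + (b * q1) * m = (N / m) * m := by
      rw [← add_mul, Nat.sub_add_cancel hbq]
    have e2 : b * L = (b * q1) * m + b := by rw [hL]; ring
    have e3 : (N / m) * m = m * (N / m) := by ring
    calc N = m * (N / m) + b := hd1.symm
      _ = (N / m - b * q1) * m + (b * q1) * m + b := by rw [e1, e3]
      _ = (N / m - b * q1) * m + ((b * q1) * m + b) := by ring
      _ = (N / m - b * q1) * m + b * L := by rw [← e2]
  obtain ⟨a, b, hab⟩ := harith
  have hCl2 : Stmt4Aux.pow P (2 ^ (m + L)) (f 0) (f 0) := by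
    rw [hab]; exact hClmix b a
  exact Stmt4Aux.descent (n' + 2) d hidem hchain hd0 hdn hn P Q hPQ haQ hb hdiag
    (m + L) ⟨f 0, hCl2⟩
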